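/- Let s ∈ ℝ, σ < s and 1 ≤ p < ∞ with (s − σ)p > 1. Let (x^{(m)})_{m≥1} be a sequence in ℓ^{s,∞} with sup_{m≥1} ‖x^{(m)}‖_{s,∞} < ∞, and let x ∈ ℓ^{s,∞}. Then x^{(m)}_n → x_n for every n ∈ ℤ if and only if ‖x^{(m)} − x‖_{σ,p} → 0 as m → ∞. -/

import Mathlib

open Filter Topology

private lemma summable_aux {r : ℝ} (hr : 1 < r) :
    Summable (fun k : ℤ => (1 + |(k : ℝ)|) ^ (-r)) := by
  have hnat : Summable (fun n : ℕ => (1 + (n : ℝ)) ^ (-r)) := by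
    have := (Real.summable_one_div_nat_add_rpow 1 r).2 hr
    refine this.congr fun n => ?_
    rw [Real.rpow_neg (by positivity), one_div, abs_of_nonneg (by positivity), add_comm]
  refine Summable.of_nat_of_neg ?_ ?_ <;>
    · refine hnat.congr fun n => ?_
      push_cast
      simp [abs_of_nonneg (n.cast_nonneg : (0:ℝ) ≤ n)]

/-- For a `‖·‖_{s,∞}`-norm bounded sequence in `ℓ^{s,∞}`, componentwise convergence to
`x₀ ∈ ℓ^{s,∞}` is equivalent to convergence in the `‖·‖_{σ,p}` norm, provided `σ < s`,
`1 ≤ p < ∞` and `(s−σ)p > 1`. -/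
theorem stmt_11 (s σ p : ℝ) (hσ : σ < s) (hp₁ : 1 ≤ p) (hsp : (s - σ) * p > 1)
    (x : ℕ → ℤ → ℂ) (x₀ : ℤ → ℂ) (M : ℝ)
    (hM : ∀ m : ℕ, ∀ k : ℤ, (1 + |k| : ℝ) ^ s * ‖x m k‖ ≤ M)
    (hx₀ : BddAbove (Set.range fun k : ℤ => (1 + |k| : ℝ) ^ s * ‖x₀ k‖)) :
    (∀ n : ℤ, Tendsto (fun m => x m n) atTop (𝓝 (x₀ n)))
      ↔ Tendsto
          (fun m => (∑' k : ℤ, ((1 + |k| : ℝ) ^ σ * ‖x m k - x₀ k‖) ^ p) ^ (1 / p))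
          atTop (𝓝 0) := by
  simp only [Int.cast_abs] at hM hx₀ ⊢
  obtain ⟨M₀, hM₀⟩ := hx₀
  rw [mem_upperBounds] at hM₀
  have hM₀' : ∀ k : ℤ, (1 + |(k:ℝ)|) ^ s * ‖x₀ k‖ ≤ M₀ :=
    fun k => hM₀ _ ⟨k, rfl⟩
  have hp0 : (0:ℝ) < p := lt_of_lt_of_le one_pos hp₁
  have hkpos : ∀ k : ℤ, (0:ℝ) < 1 + |(k:ℝ)| := fun k => by positivity
  set C : ℝ := M + M₀ with hC
  have hC0 : 0 ≤ C := by
    have h1 := hM 0 0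
    have h2 := hM₀' 0
    have h3 : (0:ℝ) ≤ (1 + |((0:ℤ):ℝ)|) ^ s * ‖x 0 0‖ := by positivity
    have h4 : (0:ℝ) ≤ (1 + |((0:ℤ):ℝ)|) ^ s * ‖x₀ 0‖ := by positivity
    show (0:ℝ) ≤ M + M₀
    linarith
  -- the key pointwise bound
  have hbound : ∀ m : ℕ, ∀ k : ℤ,
      ((1 + |(k:ℝ)|) ^ σ * ‖x m k - x₀ k‖) ^ p
        ≤ C ^ p * (1 + |(k:ℝ)|) ^ (-((s - σ) * p)) := by
    intro m k
    have hk := hkpos k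
    have h1 : ‖x m k - x₀ k‖ ≤ C * (1 + |(k:ℝ)|) ^ (-s) := by
      have habs : ‖x m k - x₀ k‖ ≤ ‖x m k‖ + ‖x₀ k‖ :=
        norm_sub_le _ _
      have h2 : (1 + |(k:ℝ)|) ^ s * (‖x m k‖ + ‖x₀ k‖) ≤ C := by
        have := hM m k; have := hM₀' k
        push_cast at *
        nlinarith
      have h3 : ‖x m k‖ + ‖x₀ k‖ ≤ C * (1 + |(k:ℝ)|) ^ (-s) := by
        rw [Real.rpow_neg hk.le, mul_comm C, ← div_eq_inv_mul ..]
        rw [le_div_iff₀ (by positivity), mul_comm]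
        exact h2
      exact habs.trans h3
    have h4 : (1 + |(k:ℝ)|) ^ σ * ‖x m k - x₀ k‖
        ≤ C * (1 + |(k:ℝ)|) ^ (σ - s) := by
      calc (1 + |(k:ℝ)|) ^ σ * ‖x m k - x₀ k‖
          ≤ (1 + |(k:ℝ)|) ^ σ * (C * (1 + |(k:ℝ)|) ^ (-s)) := by
            apply mul_le_mul_of_nonneg_left h1 (by positivity)
        _ = C * (1 + |(k:ℝ)|) ^ (σ - s) := by
            rw [← mul_assoc, mul_comm _ C, mul_assoc, ← Real.rpow_add hk]
            congr 2
            try ring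
    calc ((1 + |(k:ℝ)|) ^ σ * ‖x m k - x₀ k‖) ^ p
        ≤ (C * (1 + |(k:ℝ)|) ^ (σ - s)) ^ p :=
          Real.rpow_le_rpow (by positivity) h4 hp0.le
      _ = C ^ p * (1 + |(k:ℝ)|) ^ (-((s - σ) * p)) := by
          rw [Real.mul_rpow hC0 (by positivity), ← Real.rpow_mul hk.le]
          congr 2
          try ring
  have hsumg : Summable (fun k : ℤ => C ^ p * (1 + |(k:ℝ)|) ^ (-((s - σ) * p))) :=
    (summable_aux hsp).mul_left _
  have hsumall : ∀ m : ℕ,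
      Summable (fun k : ℤ => ((1 + |(k:ℝ)|) ^ σ * ‖x m k - x₀ k‖) ^ p) := by
    intro m
    exact hsumg.of_nonneg_of_le (fun k => by positivity) (hbound m)
  constructor
  · intro h
    -- componentwise ⇒ norm convergence
    have hS : Tendsto
        (fun m => ∑' k : ℤ, ((1 + |(k:ℝ)|) ^ σ * ‖x m k - x₀ k‖) ^ p)
        atTop (𝓝 0) := by
      have := tendsto_tsum_of_dominated_convergence (𝓕 := atTop)
        (f := fun (m : ℕ) (k : ℤ) => ((1 + |(k:ℝ)|) ^ σ * ‖x m k - x₀ k‖) ^ p)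
        (g := fun _ : ℤ => (0:ℝ))
        (bound := fun k : ℤ => C ^ p * (1 + |(k:ℝ)|) ^ (-((s - σ) * p)))
        hsumg
        (fun k => by
          have hk : Tendsto (fun m => x m k - x₀ k) atTop (𝓝 0) := by
            simpa using (h k).sub_const (x₀ k)
          have habs : Tendsto (fun m => (1 + |(k:ℝ)|) ^ σ * ‖x m k - x₀ k‖)
              atTop (𝓝 0) := by
            have := (continuous_norm.tendsto 0).comp hk
            simpa using this.const_mul ((1 + |(k:ℝ)|) ^ σ)
          have hc : ContinuousAt (fun t : ℝ => t ^ p) 0 :=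
            Real.continuousAt_rpow_const 0 p (Or.inr hp0.le)
          have := hc.tendsto.comp habs
          simpa [Function.comp_def, Real.zero_rpow hp0.ne'] using this)
        (Eventually.of_forall fun m => fun k => by
          rw [Real.norm_eq_abs, abs_of_nonneg (by positivity)]
          exact hbound m k)
      simpa using this
    have hc : ContinuousAt (fun t : ℝ => t ^ (1/p)) 0 :=
      Real.continuousAt_rpow_const 0 (1/p) (Or.inr (by positivity))
    have := hc.tendsto.comp hS
    simpa [Function.comp_def, one_div,
      Real.zero_rpow (inv_ne_zero hp0.ne')] using this
  · intro h n
    -- norm convergence ⇒ componentwise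
    have key : ∀ m : ℕ, ‖x m n - x₀ n‖
        ≤ (1 + |(n:ℝ)|) ^ (-σ) *
          (∑' k : ℤ, ((1 + |(k:ℝ)|) ^ σ * ‖x m k - x₀ k‖) ^ p) ^ (1/p) := by
      intro m
      set a : ℝ := (1 + |(n:ℝ)|) ^ σ * ‖x m n - x₀ n‖ with ha
      have ha0 : 0 ≤ a := by positivity
      have hle : a ^ p ≤ ∑' k : ℤ, ((1 + |(k:ℝ)|) ^ σ * ‖x m k - x₀ k‖) ^ p :=
        (hsumall m).le_tsum n (fun k _ => by positivity)
      have h2 : a ≤ (∑' k : ℤ, ((1 + |(k:ℝ)|) ^ σ * ‖x m k - x₀ k‖) ^ p) ^ (1/p) := by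
        have h5 := Real.rpow_le_rpow (by positivity) hle (by positivity : (0:ℝ) ≤ 1/p)
        rw [one_div, Real.rpow_rpow_inv ha0 hp0.ne'] at h5
        rw [one_div]
        exact h5
      have h3 : ‖x m n - x₀ n‖ = (1 + |(n:ℝ)|) ^ (-σ) * a := by
        rw [ha]
        rw [← mul_assoc, ← Real.rpow_add (hkpos n)]
        simp
      rw [h3]
      exact mul_le_mul_of_nonneg_left h2 (by positivity)
    have habs : Tendsto (fun m => ‖x m n - x₀ n‖) atTop (𝓝 0) := by
      have hub : Tendsto (fun m => (1 + |(n:ℝ)|) ^ (-σ) *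
          (∑' k : ℤ, ((1 + |(k:ℝ)|) ^ σ * ‖x m k - x₀ k‖) ^ p) ^ (1/p))
          atTop (𝓝 0) := by
        simpa using h.const_mul ((1 + |(n:ℝ)|) ^ (-σ))
      exact squeeze_zero (fun m => by positivity) key hub
    rw [tendsto_iff_norm_sub_tendsto_zero]
    simpa using habs
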